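/- Let V be a finite set of n items partitioned into m disjoint groups V_1, …, V_m with |V_i| ≥ 2 for all i, let f : 2^V → ℝ be nonnegative and submodular, let α, β be reals with 1/2 < α ≤ β ≤ 1, let c be a nonnegative integer with n − c ≤ ∑_{i∈[m]} (|V_i| − ⌊α·|V_i|⌋), let γ ∈ [0,1], and define g(S) := f(V ∖ S). Suppose A ⊆ V satisfies |A ∩ V_i| ≤ |V_i| − ⌊α·|V_i|⌋ for every i and g(A) ≥ γ·g(T) for every T ⊆ V satisfying |T ∩ V_i| ≤ |V_i| − ⌊α·|V_i|⌋ for every i. For each group i with |A ∩ V_i| < |V_i| − ⌊α·|V_i|⌋, let B_i be a uniform random subset of V_i ∖ A of size |V_i| − ⌊α·|V_i|⌋ − |A ∩ V_i|, sampled independently across groups, and B_i = ∅ otherwise. Then E[f(V ∖ (A ∪ (⋃_{i∈[m]} B_i)))] ≥ (γ/3)·f(S) for every (α,β)-fair set S ⊆ V with |S| ≤ c. -/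
import Mathlib



lemma abel_aux (x G : ℕ → ℝ) (hx : ∀ j, x (j+1) ≤ x j) (hG : ∀ j, 0 ≤ G j) :
    ∀ n, x n * G n - x 0 * G 0 ≤ ∑ j ∈ Finset.range n, x j * (G (j+1) - G j) := by
  intro n
  induction n with
  | zero => simp
  | succ n ih =>
    rw [Finset.sum_range_succ]
    have h1 : x (n+1) * G (n+1) ≤ x n * G (n+1) :=
      mul_le_mul_of_nonneg_right (hx n) (hG _)
    nlinarith [ih]

lemma greedy_aux {V : Type*} [Fintype V] [DecidableEq V] {N : ℕ}
    (g : Finset V → ℝ)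
    (gsub : ∀ X Y : Finset V, X ⊆ Y → ∀ v ∉ Y, g (insert v Y) - g Y ≤ g (insert v X) - g X)
    (e : Fin N → V) (he : Function.Bijective e)
    (P : ℕ → Finset V)
    (hP : ∀ t : ℕ, P t = (Finset.univ.filter fun t' : Fin N => (t' : ℕ) < t).image e) :
    ∀ U : Finset V,
      g ∅ + ∑ j ∈ Finset.univ.filter (fun j : Fin N => e j ∈ U),
        (g (P ((j : ℕ) + 1)) - g (P (j : ℕ))) ≤ g U := by
  intro U
  induction U using Finset.strongInduction with
  | _ U ih =>
    rcases U.eq_empty_or_nonempty with rfl | hUne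
    · simp
    · obtain ⟨u, hu⟩ := hUne
      obtain ⟨j0, rfl⟩ := he.surjective u
      have hIne : (Finset.univ.filter (fun j : Fin N => e j ∈ U)).Nonempty :=
        ⟨j0, by simp [hu]⟩
      set I := Finset.univ.filter (fun j : Fin N => e j ∈ U) with hI
      set j' := I.max' hIne with hj'
      have hj'I : j' ∈ I := I.max'_mem hIne
      have hj'mem : e j' ∈ U := by
        have := hj'I
        rw [hI] at this
        exact (Finset.mem_filter.1 this).2
      have hle : ∀ j ∈ I, j ≤ j' := fun j hj => I.le_max' j hj
      set U' := U.erase (e j') with hU'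
      have hUsub : U' ⊂ U := Finset.erase_ssubset hj'mem
      have hsubP : U' ⊆ P (j' : ℕ) := by
        intro v hv
        obtain ⟨t, rfl⟩ := he.surjective v
        rw [hP]
        simp only [Finset.mem_image, Finset.mem_filter, Finset.mem_univ, true_and]
        refine ⟨t, ?_, rfl⟩
        have htI : t ∈ I := by
          rw [hI]
          simp [Finset.mem_of_mem_erase hv]
        have h1 : (t : ℕ) ≤ (j' : ℕ) := hle t htI
        have h2 : t ≠ j' := by
          intro h
          rw [hU', h] at hv
          exact Finset.notMem_erase _ _ hv
        have h3 : (t : ℕ) ≠ (j' : ℕ) := fun h => h2 (Fin.val_injective h)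
        omega
      have hnotP : e j' ∉ P (j' : ℕ) := by
        rw [hP]
        simp only [Finset.mem_image, Finset.mem_filter, Finset.mem_univ, true_and]
        rintro ⟨t, ht, hte⟩
        have h := he.injective hte
        rw [h] at ht
        exact lt_irrefl _ ht
      have hPins : insert (e j') (P (j' : ℕ)) = P ((j' : ℕ) + 1) := by
        rw [hP, hP]
        ext v
        simp only [Finset.mem_insert, Finset.mem_image, Finset.mem_filter, Finset.mem_univ,
          true_and]
        constructor
        · rintro (rfl | ⟨t, ht, rfl⟩)
          · exact ⟨j', by omega, rfl⟩
          · exact ⟨t, by omega, rfl⟩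
        · rintro ⟨t, ht, rfl⟩
          rcases eq_or_ne t j' with rfl | hne
          · exact Or.inl rfl
          · have : (t : ℕ) ≠ (j' : ℕ) := fun h => hne (Fin.val_injective h)
            exact Or.inr ⟨t, by omega, rfl⟩
      have hmarg : g (P ((j' : ℕ) + 1)) - g (P (j' : ℕ)) ≤ g U - g U' := by
        have := gsub U' (P (j' : ℕ)) hsubP (e j') hnotP
        rw [hPins, hU', Finset.insert_erase hj'mem] at this
        exact this
      have hIerase : Finset.univ.filter (fun j : Fin N => e j ∈ U') = I.erase j' := by
        ext t
        simp only [hI, hU', Finset.mem_filter, Finset.mem_univ, true_and, Finset.mem_erase]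
        constructor
        · rintro ⟨h1, h2⟩
          exact ⟨fun hh => h1 (by rw [hh]), h2⟩
        · rintro ⟨h1, h2⟩
          exact ⟨fun hh => h1 (he.injective hh), h2⟩
      have hsplit : ∑ j ∈ I, (g (P ((j : ℕ) + 1)) - g (P (j : ℕ)))
          = (g (P ((j' : ℕ) + 1)) - g (P (j' : ℕ)))
            + ∑ j ∈ I.erase j', (g (P ((j : ℕ) + 1)) - g (P (j : ℕ))) :=
        (Finset.add_sum_erase I _ hj'I).symm
      have ihU' := ih U' hUsub
      rw [hIerase] at ihU'
      rw [hsplit]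
      linarith

lemma choose_key (n kk : ℕ) (h1 : 1 ≤ kk) (h3 : 3 * kk ≤ 2 * n) :
    3 * Nat.choose (n - 1) (kk - 1) ≤ 2 * Nat.choose n kk := by
  obtain ⟨n', rfl⟩ : ∃ n', n = n' + 1 := ⟨n - 1, by omega⟩
  obtain ⟨k', rfl⟩ : ∃ k', kk = k' + 1 := ⟨kk - 1, by omega⟩
  have e : (n' + 1) * Nat.choose n' k' = Nat.choose (n' + 1) (k' + 1) * (k' + 1) :=
    Nat.add_one_mul_choose_eq n' k'
  have hpos : 0 < n' + 1 := Nat.succ_pos n'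
  apply Nat.le_of_mul_le_mul_right _ hpos
  simp only [Nat.add_sub_cancel]
  calc 3 * Nat.choose n' k' * (n' + 1)
      = 3 * ((n' + 1) * Nat.choose n' k') := by ring
    _ = 3 * (Nat.choose (n' + 1) (k' + 1) * (k' + 1)) := by rw [e]
    _ = (3 * (k' + 1)) * Nat.choose (n' + 1) (k' + 1) := by ring
    _ ≤ (2 * (n' + 1)) * Nat.choose (n' + 1) (k' + 1) :=
        Nat.mul_le_mul_right _ h3
    _ = 2 * Nat.choose (n' + 1) (k' + 1) * (n' + 1) := by ring

lemma count_aux {V : Type*} [DecidableEq V] {m : ℕ} (W : Fin m → Finset V)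
    (hWdisj : ∀ i j : Fin m, i ≠ j → Disjoint (W i) (W j))
    (k : Fin m → ℕ) (hk3 : ∀ i, 3 * k i ≤ 2 * (W i).card) (v : V) :
    3 * ((Fintype.piFinset fun i => (W i).powersetCard (k i)).filter
        (fun B => v ∈ Finset.univ.biUnion fun i => B i)).card
      ≤ 2 * (Fintype.piFinset fun i => (W i).powersetCard (k i)).card := by
  set 𝒞 := Fintype.piFinset fun i => (W i).powersetCard (k i) with h𝒞
  have hBsub : ∀ B ∈ 𝒞, ∀ i, B i ⊆ W i ∧ (B i).card = k i := by
    intro B hB i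
    have := Fintype.mem_piFinset.1 hB i
    exact Finset.mem_powersetCard.1 this
  by_cases hv : ∃ i0, v ∈ W i0
  · obtain ⟨i0, hv0⟩ := hv
    have hcond : ∀ B ∈ 𝒞, (v ∈ Finset.univ.biUnion fun i => B i) ↔ v ∈ B i0 := by
      intro B hB
      constructor
      · intro h
        obtain ⟨i, -, hi⟩ := Finset.mem_biUnion.1 h
        rcases eq_or_ne i i0 with rfl | hne
        · exact hi
        · exact absurd hv0
            (Finset.disjoint_left.1 (hWdisj i i0 hne) ((hBsub B hB i).1 hi))
      · intro h
        exact Finset.mem_biUnion.2 ⟨i0, Finset.mem_univ _, h⟩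
    rw [Finset.filter_congr hcond]
    by_cases hk0 : k i0 = 0
    · have : 𝒞.filter (fun B => v ∈ B i0) = ∅ := by
        apply Finset.filter_eq_empty_iff.2
        intro B hB h
        have := (hBsub B hB i0).2
        rw [hk0] at this
        rw [Finset.card_eq_zero.1 this] at h
        exact absurd h (Finset.notMem_empty v)
      rw [this]
      simp
    · -- bijection with modified piFinset
      set s' : Fin m → Finset (Finset V) :=
        Function.update (fun i => (W i).powersetCard (k i)) i0
          (((W i0).erase v).powersetCard (k i0 - 1)) with hs'
      have hcard : (𝒞.filter (fun B => v ∈ B i0)).card = (Fintype.piFinset s').card := by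
        refine Finset.card_bij'
          (fun B _ => Function.update B i0 ((B i0).erase v))
          (fun C _ => Function.update C i0 (insert v (C i0)))
          ?_ ?_ ?_ ?_
        · intro B hB
          have hBm := Finset.mem_filter.1 hB
          apply Fintype.mem_piFinset.2
          intro i
          rcases eq_or_ne i i0 with rfl | hne
          · simp only [hs', Function.update_self]
            refine Finset.mem_powersetCard.2 ⟨Finset.erase_subset_erase v (hBsub B hBm.1 i).1, ?_⟩
            rw [Finset.card_erase_of_mem hBm.2, (hBsub B hBm.1 i).2]
          · simp only [hs', Function.update_of_ne hne]
            exact Fintype.mem_piFinset.1 hBm.1 i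
        · intro C hC
          have hCm := Fintype.mem_piFinset.1 hC
          have hCi0 := hCm i0
          rw [hs', Function.update_self] at hCi0
          obtain ⟨hCsub, hCcard⟩ := Finset.mem_powersetCard.1 hCi0
          have hvnC : v ∉ C i0 := fun h => Finset.notMem_erase v (W i0) (hCsub h)
          refine Finset.mem_filter.2 ⟨Fintype.mem_piFinset.2 fun i => ?_, ?_⟩
          · rcases eq_or_ne i i0 with rfl | hne
            · simp only [Function.update_self]
              refine Finset.mem_powersetCard.2 ⟨Finset.insert_subset hv0
                (hCsub.trans (Finset.erase_subset v (W i))), ?_⟩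
              rw [Finset.card_insert_of_notMem hvnC, hCcard]
              omega
            · simp only [Function.update_of_ne hne]
              have := hCm i
              rwa [hs', Function.update_of_ne hne] at this
          · simp only [Function.update_self]
            exact Finset.mem_insert_self v _
        · intro B hB
          have hBm := Finset.mem_filter.1 hB
          simp only [Function.update_self, Function.update_idem]
          rw [Finset.insert_erase hBm.2, Function.update_eq_self]
        · intro C hC
          have hCm := Fintype.mem_piFinset.1 hC
          have hCi0 := hCm i0
          rw [hs', Function.update_self] at hCi0
          obtain ⟨hCsub, -⟩ := Finset.mem_powersetCard.1 hCi0
          have hvnC : v ∉ C i0 := fun h => Finset.notMem_erase v (W i0) (hCsub h)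
          simp only [Function.update_self, Function.update_idem]
          rw [Finset.erase_insert hvnC, Function.update_eq_self]
      rw [hcard, Fintype.card_piFinset, h𝒞, Fintype.card_piFinset]
      have hprod1 : ∏ i, (s' i).card
          = ((W i0).erase v).card.choose (k i0 - 1) * ∏ i ∈ Finset.univ.erase i0,
              ((W i).powersetCard (k i)).card := by
        rw [← Finset.mul_prod_erase Finset.univ _ (Finset.mem_univ i0)]
        congr 1
        · simp only [hs', Function.update_self, Finset.card_powersetCard]
        · apply Finset.prod_congr rfl
          intro i hi
          simp only [hs', Function.update_of_ne (Finset.ne_of_mem_erase hi)]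
      have hprod2 : ∏ i, ((W i).powersetCard (k i)).card
          = (W i0).card.choose (k i0) * ∏ i ∈ Finset.univ.erase i0,
              ((W i).powersetCard (k i)).card := by
        rw [← Finset.mul_prod_erase Finset.univ _ (Finset.mem_univ i0)]
        rw [Finset.card_powersetCard]
      rw [hprod1, hprod2, Finset.card_erase_of_mem hv0]
      have key := choose_key (W i0).card (k i0) (Nat.one_le_iff_ne_zero.2 hk0) (hk3 i0)
      calc 3 * (((W i0).card - 1).choose (k i0 - 1) * ∏ i ∈ Finset.univ.erase i0,
              ((W i).powersetCard (k i)).card)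
            = (3 * ((W i0).card - 1).choose (k i0 - 1)) * ∏ i ∈ Finset.univ.erase i0,
              ((W i).powersetCard (k i)).card := by ring
        _ ≤ (2 * (W i0).card.choose (k i0)) * ∏ i ∈ Finset.univ.erase i0,
              ((W i).powersetCard (k i)).card := Nat.mul_le_mul_right _ key
        _ = 2 * ((W i0).card.choose (k i0) * ∏ i ∈ Finset.univ.erase i0,
              ((W i).powersetCard (k i)).card) := by ring
  · have : 𝒞.filter (fun B => v ∈ Finset.univ.biUnion fun i => B i) = ∅ := by
      apply Finset.filter_eq_empty_iff.2
      intro B hB h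
      obtain ⟨i, -, hi⟩ := Finset.mem_biUnion.1 h
      exact hv ⟨i, (hBsub B hB i).1 hi⟩
    rw [this]
    simp



/-- All groups have size at least 2, `1/2 < α ≤ β ≤ 1`,
`n - c ≤ ∑ i, (|V i| - ⌊α |V i|⌋)`, and `g S := f (V \ S) = f Sᶜ`.  Suppose `A`
satisfies `|A ∩ V i| ≤ |V i| - ⌊α |V i|⌋` for every `i` and is a `γ`-approximation
(w.r.t. `g`) among all sets satisfying these constraints.  Augmenting `A` with
independent uniform random backup sets `B i ⊆ V i \ A` of size
`|V i| - ⌊α |V i|⌋ - |A ∩ V i|` (natural subtraction; `B i = ∅` when equality already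
holds) and returning the complement yields
`E[f(V \ (A ∪ ⋃ i, B i))] ≥ (γ/3) * f S` for every `(α,β)`-fair set `S` with `|S| ≤ c`. -/
theorem stmt_19 {V : Type*} [Fintype V] [DecidableEq V]
    (m : ℕ) (Vg : Fin m → Finset V)
    (hdisj : ∀ i j : Fin m, i ≠ j → Disjoint (Vg i) (Vg j))
    (hcover : Finset.univ.biUnion Vg = (Finset.univ : Finset V))
    (hsize : ∀ i : Fin m, 2 ≤ (Vg i).card)
    (f : Finset V → ℝ)
    (hf_nonneg : ∀ S : Finset V, 0 ≤ f S)
    (hf_submod : ∀ X Y : Finset V, X ⊆ Y → ∀ e ∉ Y,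
      f (insert e Y) - f Y ≤ f (insert e X) - f X)
    (α β γ : ℝ) (hα : 1 / 2 < α) (hαβ : α ≤ β) (hβ1 : β ≤ 1)
    (hγ0 : 0 ≤ γ) (hγ1 : γ ≤ 1)
    (c : ℕ)
    (hc : Fintype.card V - c ≤
      ∑ i : Fin m, ((Vg i).card - ⌊α * ((Vg i).card : ℝ)⌋₊))
    (A : Finset V)
    (hA : ∀ i : Fin m, (A ∩ Vg i).card ≤ (Vg i).card - ⌊α * ((Vg i).card : ℝ)⌋₊)
    (hApx : ∀ T : Finset V,
      (∀ i : Fin m, (T ∩ Vg i).card ≤ (Vg i).card - ⌊α * ((Vg i).card : ℝ)⌋₊) →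
      γ * f (Tᶜ) ≤ f (Aᶜ))
    (k : Fin m → ℕ)
    (hk : ∀ i : Fin m, k i = (Vg i).card - ⌊α * ((Vg i).card : ℝ)⌋₊ - (A ∩ Vg i).card)
    (𝒞 : Finset (Fin m → Finset V))
    (h𝒞 : 𝒞 = Fintype.piFinset fun i => (Vg i \ A).powersetCard (k i)) :
    ∀ S : Finset V,
      (∀ i : Fin m, ⌊α * ((Vg i).card : ℝ)⌋₊ ≤ (S ∩ Vg i).card ∧
        (S ∩ Vg i).card ≤ ⌊β * ((Vg i).card : ℝ)⌋₊) →
      S.card ≤ c →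
      (γ / 3) * f S ≤
        (∑ B ∈ 𝒞, f ((A ∪ Finset.univ.biUnion fun i => B i)ᶜ)) / (𝒞.card : ℝ) := by
  intro S hS hScard
  subst h𝒞
  set 𝒞 := Fintype.piFinset fun i => (Vg i \ A).powersetCard (k i) with h𝒞
  -- basic per-group arithmetic
  have hfl : ∀ i : Fin m, ⌊α * ((Vg i).card : ℝ)⌋₊ ≤ (Vg i).card ∧
      (Vg i).card ≤ 3 * ⌊α * ((Vg i).card : ℝ)⌋₊ := by
    intro i
    set n := (Vg i).card with hn
    have hn2 : 2 ≤ n := hsize i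
    have hn2' : (2 : ℝ) ≤ (n : ℝ) := by exact_mod_cast hn2
    have hα1 : α ≤ 1 := hαβ.trans hβ1
    have h1 : (1 : ℝ) ≤ α * n := by nlinarith
    have hfl1 : 1 ≤ ⌊α * (n : ℝ)⌋₊ := Nat.le_floor (by exact_mod_cast h1)
    have hlt : α * (n : ℝ) < ⌊α * (n : ℝ)⌋₊ + 1 := Nat.lt_floor_add_one _
    have hub : ⌊α * (n : ℝ)⌋₊ ≤ n := by
      have : ⌊α * (n : ℝ)⌋₊ ≤ ⌊(n : ℝ)⌋₊ :=
        Nat.floor_le_floor (by nlinarith)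
      simpa using this
    have hlow : (n : ℝ) < 2 * ⌊α * (n : ℝ)⌋₊ + 2 := by nlinarith
    have hlow' : n < 2 * ⌊α * (n : ℝ)⌋₊ + 2 := by exact_mod_cast hlow
    exact ⟨hub, by omega⟩
  have hWcard : ∀ i : Fin m, (Vg i \ A).card = (Vg i).card - (A ∩ Vg i).card := by
    intro i
    have h1 := Finset.card_inter_add_card_sdiff (Vg i) A
    have h2 : (Vg i ∩ A).card = (A ∩ Vg i).card := by rw [Finset.inter_comm]
    omega
  have hk3 : ∀ i : Fin m, 3 * k i ≤ 2 * (Vg i \ A).card := by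
    intro i
    have h1 := (hfl i).1
    have h2 := (hfl i).2
    have h3 := hA i
    have h4 := hk i
    have h5 := hWcard i
    omega
  have hkle : ∀ i : Fin m, k i ≤ (Vg i \ A).card := fun i => by
    have := hk3 i; omega
  -- the complement function
  set g : Finset V → ℝ := fun X => f ((A ∪ X)ᶜ) with hg
  have gnn : ∀ X, 0 ≤ g X := fun X => hf_nonneg _
  have gsub : ∀ X Y : Finset V, X ⊆ Y → ∀ v ∉ Y,
      g (insert v Y) - g Y ≤ g (insert v X) - g X := by
    intro X Y hXY v hv
    simp only [hg]
    by_cases hvA : v ∈ A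
    · have h1 : A ∪ insert v Y = A ∪ Y := by
        rw [Finset.union_insert, Finset.insert_eq_self.2 (Finset.mem_union_left Y hvA)]
      have h2 : A ∪ insert v X = A ∪ X := by
        rw [Finset.union_insert, Finset.insert_eq_self.2 (Finset.mem_union_left X hvA)]
      rw [h1, h2]
      simp
    · have hY : (A ∪ insert v Y)ᶜ = ((A ∪ Y)ᶜ).erase v := by
        rw [Finset.union_insert, Finset.compl_insert]
      have hX : (A ∪ insert v X)ᶜ = ((A ∪ X)ᶜ).erase v := by
        rw [Finset.union_insert, Finset.compl_insert]
      have hvY : v ∈ (A ∪ Y)ᶜ := by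
        simp only [Finset.mem_compl, Finset.mem_union]
        tauto
      have hvX : v ∈ (A ∪ X)ᶜ := by
        have hvX' : v ∉ X := fun h => hv (hXY h)
        simp only [Finset.mem_compl, Finset.mem_union]
        tauto
      have hsub2 : (A ∪ Y)ᶜ ⊆ (A ∪ X)ᶜ := by
        intro u hu
        simp only [Finset.mem_compl, Finset.mem_union] at hu ⊢
        exact fun h => hu (h.imp id (fun hx => hXY hx))
      have key := hf_submod (((A ∪ Y)ᶜ).erase v) (((A ∪ X)ᶜ).erase v)
        (Finset.erase_subset_erase v hsub2) v (Finset.notMem_erase v _)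
      rw [Finset.insert_erase hvX, Finset.insert_erase hvY] at key
      rw [hY, hX]
      linarith
  -- the counts
  set cnt : V → ℕ :=
    fun v => (𝒞.filter (fun B => v ∈ Finset.univ.biUnion fun i => B i)).card with hcntdef
  have hcnt : ∀ v, 3 * cnt v ≤ 2 * 𝒞.card := by
    intro v
    exact count_aux (fun i => Vg i \ A)
      (fun i j hij => Finset.disjoint_of_subset_left (Finset.sdiff_subset)
        (Finset.disjoint_of_subset_right (Finset.sdiff_subset) (hdisj i j hij)))
      k hk3 v
  -- the sorted enumeration
  set N := Fintype.card V with hN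
  set q : Fin N ≃ V := (Fintype.equivFin V).symm with hq
  set σ : Equiv.Perm (Fin N) := Tuple.sort (fun j : Fin N => -(cnt (q j) : ℤ)) with hσ
  set e : Fin N → V := fun j => q (σ j) with he_def
  have he : Function.Bijective e := (σ.trans q).bijective
  have hmono : ∀ s t : Fin N, s ≤ t → cnt (e t) ≤ cnt (e s) := by
    intro s t hst
    have h := Tuple.monotone_sort (fun j : Fin N => -(cnt (q j) : ℤ)) hst
    rw [← hσ] at h
    simp only [Function.comp_apply] at h
    have h2 : (cnt (q (σ t)) : ℤ) ≤ (cnt (q (σ s)) : ℤ) := by omega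
    simp only [he_def]
    exact_mod_cast h2
  set P : ℕ → Finset V :=
    fun t => (Finset.univ.filter fun t' : Fin N => (t' : ℕ) < t).image e with hPdef
  have hP0 : P 0 = ∅ := by
    simp [hPdef]
  set G : ℕ → ℝ := fun t => g (P t) with hGdef
  set x : ℕ → ℝ := fun t => if h : t < N then (cnt (e ⟨t, h⟩) : ℝ) else 0 with hxdef
  have hGnn : ∀ t, 0 ≤ G t := fun t => gnn _
  have hxnn : ∀ t, 0 ≤ x t := by
    intro t
    simp only [hxdef]
    split
    · positivity
    · exact le_refl 0
  have hx_anti : ∀ j, x (j + 1) ≤ x j := by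
    intro j
    simp only [hxdef]
    by_cases h1 : j + 1 < N
    · have h0 : j < N := by omega
      rw [dif_pos h1, dif_pos h0]
      have hm := hmono ⟨j, h0⟩ ⟨j + 1, h1⟩ (by simp [Fin.mk_le_mk])
      exact_mod_cast hm
    · rw [dif_neg h1]
      by_cases h0 : j < N
      · rw [dif_pos h0]; positivity
      · rw [dif_neg h0]
  have habel := abel_aux x G hx_anti hGnn N
  have hgreedy : ∀ B ∈ 𝒞,
      g ∅ + ∑ j ∈ Finset.univ.filter
          (fun j : Fin N => e j ∈ Finset.univ.biUnion fun i => B i),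
        (g (P ((j : ℕ) + 1)) - g (P (j : ℕ))) ≤ g (Finset.univ.biUnion fun i => B i) :=
    fun B _ => greedy_aux g gsub e he P (fun t => by rw [hPdef]) _
  have hswap : ∑ B ∈ 𝒞, (∑ j ∈ Finset.univ.filter
        (fun j : Fin N => e j ∈ Finset.univ.biUnion fun i => B i),
        (g (P ((j : ℕ) + 1)) - g (P (j : ℕ))))
      = ∑ j : Fin N, (cnt (e j) : ℝ) * (g (P ((j : ℕ) + 1)) - g (P (j : ℕ))) := by
    have h1 : ∀ B ∈ 𝒞, ∑ j ∈ Finset.univ.filter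
          (fun j : Fin N => e j ∈ Finset.univ.biUnion fun i => B i),
          (g (P ((j : ℕ) + 1)) - g (P (j : ℕ)))
        = ∑ j : Fin N, if e j ∈ Finset.univ.biUnion (fun i => B i)
            then (g (P ((j : ℕ) + 1)) - g (P (j : ℕ))) else 0 :=
      fun B _ => Finset.sum_filter _ _
    rw [Finset.sum_congr rfl h1, Finset.sum_comm]
    apply Finset.sum_congr rfl
    intro j _
    rw [← Finset.sum_filter, Finset.sum_const, hcntdef]
    simp [nsmul_eq_mul]
  have hsum1 : (𝒞.card : ℝ) * g ∅
        + ∑ j : Fin N, (cnt (e j) : ℝ) * (g (P ((j : ℕ) + 1)) - g (P (j : ℕ)))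
      ≤ ∑ B ∈ 𝒞, g (Finset.univ.biUnion fun i => B i) := by
    have h2 := Finset.sum_le_sum hgreedy
    rw [Finset.sum_add_distrib, Finset.sum_const, hswap, nsmul_eq_mul] at h2
    exact h2
  have hfin : ∑ j : Fin N, (cnt (e j) : ℝ) * (g (P ((j : ℕ) + 1)) - g (P (j : ℕ)))
      = ∑ t ∈ Finset.range N, x t * (G (t + 1) - G t) := by
    rw [← Fin.sum_univ_eq_sum_range (fun t => x t * (G (t + 1) - G t)) N]
    apply Finset.sum_congr rfl
    intro j _
    simp only [hxdef, hGdef]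
    rw [dif_pos j.isLt]
  have hG0 : G 0 = g ∅ := by simp only [hGdef, hP0]
  have hxG0 : x 0 * G 0 ≤ (2 / 3 * (𝒞.card : ℝ)) * g ∅ := by
    rw [hG0]
    apply mul_le_mul_of_nonneg_right _ (gnn ∅)
    simp only [hxdef]
    split
    · rename_i h0
      have hcv := hcnt (e ⟨0, h0⟩)
      have hcv' : 3 * ((cnt (e ⟨0, h0⟩)) : ℝ) ≤ 2 * (𝒞.card : ℝ) := by exact_mod_cast hcv
      linarith
    · exact mul_nonneg (by norm_num) (Nat.cast_nonneg _)
  have hxGN : 0 ≤ x N * G N := mul_nonneg (hxnn N) (hGnn N)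
  have htotal : (1 / 3 : ℝ) * (𝒞.card : ℝ) * g ∅
      ≤ ∑ B ∈ 𝒞, g (Finset.univ.biUnion fun i => B i) := by
    linarith [hsum1, habel, hfin, hxG0, hxGN]
  have hγS : γ * f S ≤ g ∅ := by
    have hT : ∀ i : Fin m, (Sᶜ ∩ Vg i).card
        ≤ (Vg i).card - ⌊α * ((Vg i).card : ℝ)⌋₊ := by
      intro i
      have h1 : Sᶜ ∩ Vg i = Vg i \ S := by
        ext u
        simp only [Finset.mem_inter, Finset.mem_compl, Finset.mem_sdiff]
        tauto
      have h2 := Finset.card_inter_add_card_sdiff (Vg i) S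
      have h3 := (hS i).1
      have h4 : (Vg i ∩ S).card = (S ∩ Vg i).card := by rw [Finset.inter_comm]
      rw [h1]
      omega
    have h5 := hApx Sᶜ hT
    rw [compl_compl] at h5
    have h6 : g ∅ = f Aᶜ := by
      simp only [hg]
      rw [Finset.union_empty]
    rw [h6]
    exact h5
  have hpos : 0 < 𝒞.card := by
    rw [Finset.card_pos]
    have hne : ∀ i, ((Vg i \ A).powersetCard (k i)).Nonempty :=
      fun i => Finset.powersetCard_nonempty.2 (hkle i)
    exact ⟨fun i => (hne i).choose, Fintype.mem_piFinset.2 fun i => (hne i).choose_spec⟩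
  rw [le_div_iff₀ (by exact_mod_cast hpos)]
  have hsum_eq : ∑ B ∈ 𝒞, f ((A ∪ Finset.univ.biUnion fun i => B i)ᶜ)
      = ∑ B ∈ 𝒞, g (Finset.univ.biUnion fun i => B i) := rfl
  rw [hsum_eq]
  have hcnn : (0 : ℝ) ≤ (𝒞.card : ℝ) := Nat.cast_nonneg _
  have hmul : (1 / 3 * (𝒞.card : ℝ)) * (γ * f S) ≤ (1 / 3 * (𝒞.card : ℝ)) * g ∅ :=
    mul_le_mul_of_nonneg_left hγS (mul_nonneg (by norm_num) hcnn)
  linarith [htotal, hmul]
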